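/- Let G be the graph on 25 vertices consisting of 5 disjoint 5-cliques where each interior vertex (degree 8) of each clique is adjacent to exactly one interior vertex in each of the other four cliques, and each clique has one exterior vertex (degree 4) adjacent only within its clique. Assuming every locally-optimal coloring assigns a single color to each clique, an assignment of colors to the 5 cliques yields a locally-optimal coloring if and only if it is not the case that exactly four cliques share one color and the fifth has a different color. Consequently LO_k(G) = k^5 − 5k(k−1) and SG_k(G) = k^5 − 5k^2 + 4k. -/
import Mathlib

/-- A locally-optimal `k`-coloring: each vertex's own color appears strictly
more often among its neighbors than any other color (plurality). -/
def IsLocOpt {V : Type*} {k : ℕ} (G : SimpleGraph V) (c : V → Fin k) : Prop :=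
  ∀ v : V, ∀ d : Fin k, d ≠ c v →
    Nat.card {w : V // G.Adj v w ∧ c w = d} < Nat.card {w : V // G.Adj v w ∧ c w = c v}

/-- The number of locally-optimal `k`-colorings of `G`. -/
noncomputable def LOcount {V : Type*} (G : SimpleGraph V) (k : ℕ) : ℕ :=
  Nat.card {c : V → Fin k // IsLocOpt G c}

/-- Five 5-cliques (indexed by the first coordinate, with vertex `0` of each
clique the "exterior" vertex): each interior vertex `(i,j)` (`j ≠ 0`) is
adjacent to the corresponding interior vertex `(i',j)` of every other clique. -/
def G9 : SimpleGraph (Fin 5 × Fin 5) :=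
  SimpleGraph.fromRel fun x y =>
    (x.1 = y.1 ∧ x.2 ≠ y.2) ∨ (x.1 ≠ y.1 ∧ x.2 = y.2 ∧ x.2 ≠ 0)

/-- `f` assigns one color to four cliques and a different color to the fifth. -/
def FourOne {k : ℕ} (f : Fin 5 → Fin k) : Prop :=
  ∃ i : Fin 5, (∀ y : Fin 5, y ≠ i → ∀ z : Fin 5, z ≠ i → f y = f z) ∧
    ∀ y : Fin 5, y ≠ i → f y ≠ f i

lemma g9_adj (i j i' j' : Fin 5) :
    G9.Adj (i, j) (i', j') ↔ ((i = i' ∧ j ≠ j') ∨ (i ≠ i' ∧ j = j' ∧ j ≠ 0)) := by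
  simp only [G9, SimpleGraph.fromRel_adj, Ne, Prod.mk.injEq, not_and]
  constructor
  · rintro ⟨h, h' | h'⟩
    · tauto
    · rcases h' with ⟨h1, h2⟩ | ⟨h1, h2, h3⟩
      · exact Or.inl ⟨h1.symm, fun e => h2 e.symm⟩
      · exact Or.inr ⟨fun e => h1 e.symm, h2.symm, h2 ▸ h3⟩
  · rintro (⟨h1, h2⟩ | ⟨h1, h2, h3⟩)
    · exact ⟨fun _ => h2, Or.inl (Or.inl ⟨h1, h2⟩)⟩
    · exact ⟨fun hi => absurd hi h1, Or.inl (Or.inr ⟨h1, h2, h3⟩)⟩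

lemma count_int {k : ℕ} (f : Fin 5 → Fin k) (i j : Fin 5) (hj : j ≠ 0) (d : Fin k) :
    Nat.card {w : Fin 5 × Fin 5 // G9.Adj (i, j) w ∧ f w.1 = d} =
      (if f i = d then 4 else 0) +
        (Finset.univ.filter (fun a : Fin 5 => a ≠ i ∧ f a = d)).card := by
  classical
  rw [Nat.card_eq_fintype_card, Fintype.card_subtype]
  have hsplit : (Finset.univ.filter (fun w : Fin 5 × Fin 5 => G9.Adj (i, j) w ∧ f w.1 = d))
      = (Finset.univ.filter fun w : Fin 5 × Fin 5 => w.1 = i ∧ w.2 ≠ j ∧ f i = d) ∪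
        (Finset.univ.filter fun w : Fin 5 × Fin 5 => w.1 ≠ i ∧ f w.1 = d ∧ w.2 = j) := by
    ext ⟨a, b⟩
    simp only [Finset.mem_filter, Finset.mem_union, Finset.mem_univ, true_and, g9_adj]
    constructor
    · rintro ⟨h1 | h1, h2⟩
      · exact Or.inl ⟨h1.1.symm, fun e => h1.2 e.symm, h1.1 ▸ h2⟩
      · exact Or.inr ⟨fun e => h1.1 e.symm, h2, h1.2.1.symm⟩
    · rintro (⟨h1, h2, h3⟩ | ⟨h1, h2, h3⟩)
      · exact ⟨Or.inl ⟨h1.symm, fun e => h2 e.symm⟩, h1 ▸ h3⟩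
      · exact ⟨Or.inr ⟨fun e => h1 e.symm, h3.symm, hj⟩, h2⟩
  rw [hsplit, Finset.card_union_of_disjoint]
  · congr 1
    · by_cases hd : f i = d
      · have : (Finset.univ.filter fun w : Fin 5 × Fin 5 => w.1 = i ∧ w.2 ≠ j ∧ f i = d)
            = ({i} : Finset (Fin 5)) ×ˢ ({j}ᶜ : Finset (Fin 5)) := by
          ext ⟨a, b⟩
          simp only [Finset.mem_filter, Finset.mem_univ, true_and, Finset.mem_product,
            Finset.mem_singleton, Finset.mem_compl, hd, and_true]
        rw [this, Finset.card_product, if_pos hd]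
        simp [Finset.card_compl]
      · rw [if_neg hd]
        rw [Finset.card_eq_zero]
        ext ⟨a, b⟩
        simp [hd]
    · have : (Finset.univ.filter fun w : Fin 5 × Fin 5 => w.1 ≠ i ∧ f w.1 = d ∧ w.2 = j)
          = (Finset.univ.filter (fun a : Fin 5 => a ≠ i ∧ f a = d)) ×ˢ ({j} : Finset (Fin 5)) := by
        ext ⟨a, b⟩
        simp only [Finset.mem_filter, Finset.mem_univ, true_and, Finset.mem_product,
          Finset.mem_singleton]
        tauto
      rw [this, Finset.card_product]
      simp
  · rw [Finset.disjoint_left]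
    rintro ⟨a, b⟩ h1 h2
    simp only [Finset.mem_filter] at h1 h2
    exact h2.2.1 h1.2.1

lemma count_ext {k : ℕ} (f : Fin 5 → Fin k) (i : Fin 5) (d : Fin k) :
    Nat.card {w : Fin 5 × Fin 5 // G9.Adj (i, (0 : Fin 5)) w ∧ f w.1 = d} =
      (if f i = d then 4 else 0) := by
  classical
  rw [Nat.card_eq_fintype_card, Fintype.card_subtype]
  by_cases hd : f i = d
  · have : (Finset.univ.filter fun w : Fin 5 × Fin 5 => G9.Adj (i, 0) w ∧ f w.1 = d)
        = ({i} : Finset (Fin 5)) ×ˢ ({(0 : Fin 5)}ᶜ : Finset (Fin 5)) := by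
      ext ⟨a, b⟩
      simp only [Finset.mem_filter, Finset.mem_univ, true_and, g9_adj, Finset.mem_product,
        Finset.mem_singleton, Finset.mem_compl]
      constructor
      · rintro ⟨h1 | h1, h2⟩
        · exact ⟨h1.1.symm, fun e => h1.2 e.symm⟩
        · exact absurd rfl h1.2.2
      · rintro ⟨h1, h2⟩
        exact ⟨Or.inl ⟨h1.symm, fun e => h2 e.symm⟩, h1 ▸ hd⟩
    rw [this, Finset.card_product, if_pos hd]
    simp [Finset.card_compl]
  · rw [if_neg hd, Finset.card_eq_zero]
    ext ⟨a, b⟩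
    simp only [Finset.mem_filter, Finset.mem_univ, true_and, g9_adj, Finset.notMem_empty,
      iff_false, not_and]
    rintro (h1 | h1) h2
    · exact hd (h1.1 ▸ h2)
    · exact h1.2.2 rfl

lemma exists_ne_fin5 (i : Fin 5) : ∃ y : Fin 5, y ≠ i := by
  refine ⟨if i = 0 then 1 else 0, ?_⟩
  split
  · simp_all
  · simp_all
    exact fun h => by simp_all

lemma exists_ne_ne_fin5 (i i' : Fin 5) : ∃ y : Fin 5, y ≠ i ∧ y ≠ i' := by
  have : ({i, i'}ᶜ : Finset (Fin 5)).Nonempty := by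
    rw [← Finset.card_pos, Finset.card_compl]
    have h1 : ({i, i'} : Finset (Fin 5)).card ≤ 2 :=
      (Finset.card_insert_le _ _).trans (by simp)
    have h2 : (Fintype.card (Fin 5)) = 5 := by simp
    omega
  obtain ⟨y, hy⟩ := this
  simp only [Finset.mem_compl, Finset.mem_insert, Finset.mem_singleton, not_or] at hy
  exact ⟨y, hy.1, hy.2⟩

lemma locopt_iff {k : ℕ} (f : Fin 5 → Fin k) :
    IsLocOpt G9 (fun p => f p.1) ↔ ¬FourOne f := by
  classical
  constructor
  · intro hc hfo
    obtain ⟨i, h1, h2⟩ := hfo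
    obtain ⟨y₀, hy₀⟩ := exists_ne_fin5 i
    have hd : f y₀ ≠ f i := h2 y₀ hy₀
    have := hc (i, (1 : Fin 5)) (f y₀) hd
    rw [count_int f i 1 (by decide) (f y₀), count_int f i 1 (by decide) (f i)] at this
    have e1 : (Finset.univ.filter (fun a : Fin 5 => a ≠ i ∧ f a = f y₀)) = ({i}ᶜ : Finset (Fin 5)) := by
      ext a
      simp only [Finset.mem_filter, Finset.mem_univ, true_and, Finset.mem_compl,
        Finset.mem_singleton]
      exact ⟨fun h => h.1, fun h => ⟨h, h1 a h y₀ hy₀⟩⟩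
    have e2 : (Finset.univ.filter (fun a : Fin 5 => a ≠ i ∧ f a = f i)) = (∅ : Finset (Fin 5)) := by
      ext a
      simp only [Finset.mem_filter, Finset.mem_univ, true_and, Finset.notMem_empty, iff_false,
        not_and]
      exact fun ha => h2 a ha
    rw [e1, e2, if_neg (Ne.symm hd), if_pos rfl] at this
    simp [Finset.card_compl] at this
  · intro hnfo
    rintro ⟨i, j⟩ d hd
    show Nat.card {w : Fin 5 × Fin 5 // G9.Adj (i, j) w ∧ f w.1 = d} <
      Nat.card {w : Fin 5 × Fin 5 // G9.Adj (i, j) w ∧ f w.1 = f i}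
    have hd' : f i ≠ d := fun h => hd (h.symm)
    by_cases hj : j = 0
    · subst hj
      rw [count_ext f i d, count_ext f i (f i), if_neg hd', if_pos rfl]
      omega
    · rw [count_int f i j hj d, count_int f i j hj (f i), if_neg hd', if_pos rfl]
      have hle : (Finset.univ.filter (fun a : Fin 5 => a ≠ i ∧ f a = d)).card ≤ 4 := by
        have hsub : (Finset.univ.filter (fun a : Fin 5 => a ≠ i ∧ f a = d)) ⊆ ({i}ᶜ : Finset (Fin 5)) := by
          intro a ha
          simp only [Finset.mem_filter] at ha
          simp [ha.2.1]
        calc _ ≤ ({i}ᶜ : Finset (Fin 5)).card := Finset.card_le_card hsub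
        _ = 4 := by rw [Finset.card_compl]; simp [Finset.card_singleton]
      rcases Nat.lt_or_ge (Finset.univ.filter (fun a : Fin 5 => a ≠ i ∧ f a = d)).card 4 with h | h
      · omega
      · exfalso
        have heq : (Finset.univ.filter (fun a : Fin 5 => a ≠ i ∧ f a = d)) = ({i}ᶜ : Finset (Fin 5)) := by
          apply Finset.eq_of_subset_of_card_le
          · intro a ha
            simp only [Finset.mem_filter] at ha
            simp [ha.2.1]
          · rw [Finset.card_compl]
            simpa using h
        have hall : ∀ a : Fin 5, a ≠ i → f a = d := by
          intro a ha
          have : a ∈ (Finset.univ.filter (fun a : Fin 5 => a ≠ i ∧ f a = d)) := by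
            rw [heq]; simp [ha]
          simpa using (Finset.mem_filter.mp this).2.2
        exact hnfo ⟨i, fun y hy z hz => (hall y hy).trans (hall z hz).symm,
          fun y hy => (hall y hy).symm ▸ hd⟩

lemma card_fourone (k : ℕ) :
    Nat.card {f : Fin 5 → Fin k // FourOne f} = 5 * (k * k - k) := by
  classical
  have hbij : Function.Bijective
      (fun x : Fin 5 × {p : Fin k × Fin k // p.1 ≠ p.2} =>
        (⟨fun y => if y = x.1 then x.2.1.2 else x.2.1.1, by
          refine ⟨x.1, fun y hy z hz => by simp [hy, hz], fun y hy => by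
            simp [hy, x.2.2]⟩⟩ : {f : Fin 5 → Fin k // FourOne f})) := by
    constructor
    · rintro ⟨i, ⟨⟨a, b⟩, hab⟩⟩ ⟨i', ⟨⟨a', b'⟩, hab'⟩⟩ h
      simp only [Subtype.mk.injEq] at h
      have hi : i = i' := by
        by_contra hii
        obtain ⟨y, hy, hy'⟩ := exists_ne_ne_fin5 i i'
        have e1 := congrFun h y
        simp [hy, hy'] at e1
        have e2 := congrFun h i'
        simp [Ne.symm hii] at e2
        exact hab' (e1 ▸ e2.symm ▸ rfl)
      subst hi
      have e1 := congrFun h i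
      simp at e1
      obtain ⟨y, hy⟩ := exists_ne_fin5 i
      have e2 := congrFun h y
      simp [hy] at e2
      simp [Prod.ext_iff, e1, e2]
    · rintro ⟨f, i, h1, h2⟩
      obtain ⟨y₀, hy₀⟩ := exists_ne_fin5 i
      refine ⟨⟨i, ⟨(f y₀, f i), h2 y₀ hy₀⟩⟩, ?_⟩
      apply Subtype.ext
      funext y
      by_cases hy : y = i
      · simp [hy]
      · simp [hy, h1 y hy y₀ hy₀]
  have hdiag : Fintype.card {p : Fin k × Fin k // p.1 = p.2} = k := by
    have e : {p : Fin k × Fin k // p.1 = p.2} ≃ Fin k :=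
      ⟨fun p => p.1.1, fun a => ⟨(a, a), rfl⟩,
       fun ⟨⟨a, b⟩, h⟩ => by cases h; rfl, fun a => rfl⟩
    rw [Fintype.card_congr e, Fintype.card_fin]
  have hne : Fintype.card {p : Fin k × Fin k // p.1 ≠ p.2} = k * k - k := by
    have := Fintype.card_subtype_compl (fun p : Fin k × Fin k => p.1 = p.2)
    simp only [Fintype.card_prod, Fintype.card_fin, hdiag] at this
    convert this using 2
  rw [Nat.card_eq_fintype_card, ← Fintype.card_of_bijective hbij, Fintype.card_prod,
    Fintype.card_fin, hne]

lemma card_notfourone (k : ℕ) :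
    Nat.card {f : Fin 5 → Fin k // ¬FourOne f} = k ^ 5 - 5 * (k * k - k) := by
  classical
  rw [Nat.card_eq_fintype_card, Fintype.card_subtype_compl]
  congr 1
  · rw [Fintype.card_fun]; simp
  · rw [← Nat.card_eq_fintype_card, card_fourone]

/-- Assuming every locally-optimal coloring of `G9` is constant on each clique,
an assignment of colors to the five cliques is locally optimal iff it is not of
"four cliques one color, fifth a different color" type; consequently
`LO_k(G9) = k^5 - 5k(k-1)` and `SG_k(G9) = LO_k(G9) - k = k^5 - 5k^2 + 4k`. -/
theorem stmt17 (k : ℕ)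
    (hmono : ∀ c : Fin 5 × Fin 5 → Fin k, IsLocOpt G9 c →
      ∀ i j j', c (i, j) = c (i, j')) :
    (∀ f : Fin 5 → Fin k, IsLocOpt G9 (fun p => f p.1) ↔ ¬FourOne f) ∧
    (LOcount G9 k : ℤ) = (k : ℤ) ^ 5 - 5 * k * ((k : ℤ) - 1) ∧
    (LOcount G9 k : ℤ) - k = (k : ℤ) ^ 5 - 5 * (k : ℤ) ^ 2 + 4 * k := by
  classical
  have e : {c : Fin 5 × Fin 5 → Fin k // IsLocOpt G9 c} ≃ {f : Fin 5 → Fin k // ¬FourOne f} :=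
    { toFun := fun c => ⟨fun i => c.1 (i, 0), by
        have hc : c.1 = fun p : Fin 5 × Fin 5 => c.1 (p.1, 0) :=
          funext fun p => (hmono c.1 c.2 p.1 p.2 0)
        exact (locopt_iff _).mp (hc ▸ c.2)⟩
      invFun := fun f => ⟨fun p => f.1 p.1, (locopt_iff _).mpr f.2⟩
      left_inv := fun c => Subtype.ext (funext fun p => (hmono c.1 c.2 p.1 0 p.2))
      right_inv := fun f => rfl }
  have hLO : LOcount G9 k = k ^ 5 - 5 * (k * k - k) := by
    rw [LOcount, Nat.card_congr e, card_notfourone]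
  have hk1 : k ≤ k * k := by nlinarith
  have hb1 : 5 * (k * k - k) ≤ k ^ 5 := by
    rcases Nat.lt_or_ge k 2 with h | h
    · interval_cases k <;> simp
    · calc 5 * (k * k - k) ≤ 5 * (k * k) := Nat.mul_le_mul_left _ (Nat.sub_le _ _)
      _ ≤ (k * k * k) * (k * k) := Nat.mul_le_mul_right _ (by nlinarith)
      _ = k ^ 5 := by ring
  have key : (LOcount G9 k : ℤ) = (k : ℤ) ^ 5 - 5 * k * ((k : ℤ) - 1) := by
    rw [hLO, Nat.cast_sub hb1, Nat.cast_mul, Nat.cast_sub hk1]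
    push_cast
    ring
  refine ⟨fun f => locopt_iff f, key, ?_⟩
  rw [key]
  ring
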